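/- Fix 1 < p < ∞, r ∈ ℕ with r ≥ 2, M = ⌊log₂ r⌋, α > 0 with α^M = r^(1/p). Let (x_n) be a block sequence of finitely supported sequences with coordinates in {±α^j : j ∈ ℤ} ∪ {0} satisfying α^(-2) ≤ ‖x_n‖_p ≤ α^(-1) for all n. Then there exists a block sequence (y_n) of blocks of (x_n), with coordinates in {±α^j : j ∈ ℤ} ∪ {0}, such that α^(-3) ≤ ‖J_m y_n‖_p ≤ 1 for all n, m. -/

import Mathlib

open scoped BigOperators Classical

/-- The `ℓ_p` norm of a finitely supported sequence. -/
noncomputable def lpNorm (p : ℝ) (x : ℕ →₀ ℝ) : ℝ :=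
  (∑ i ∈ x.support, |x i| ^ p) ^ (1 / p : ℝ)

/-- Finitely supported sequences all of whose coordinates lie in
`C_α = {± α^j : j ∈ ℤ} ∪ {0}`. -/
def Nset (α : ℝ) : Set (ℕ →₀ ℝ) := {x | ∀ i, x i ≠ 0 → ∃ j : ℤ, |x i| = α ^ j}

/-- `J_m x` : the restriction of `x` to the coordinates `i` with
`α^{-m}·x(i) ∈ C_s`. -/
noncomputable def Jpart (α s : ℝ) (m : ℕ) (x : ℕ →₀ ℝ) : ℕ →₀ ℝ :=
  x.filter (fun i => ∃ j : ℤ, |x i| = α ^ (m : ℤ) * s ^ j)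

/-- `supp x₁ < supp x₂ < …` -/
def IsBlockSeq (x : ℕ → ℕ →₀ ℝ) : Prop :=
  ∀ n m : ℕ, n < m → ∀ a ∈ (x n).support, ∀ b ∈ (x m).support, a < b

/-! ### Auxiliary material -/

noncomputable def pnorm (p : ℝ) (x : ℕ →₀ ℝ) : ℝ := ∑ i ∈ x.support, |x i| ^ p

lemma pnorm_nonneg (p : ℝ) (x : ℕ →₀ ℝ) : 0 ≤ pnorm p x :=
  Finset.sum_nonneg fun _ _ => Real.rpow_nonneg (abs_nonneg _) _

lemma lpNorm_def (p : ℝ) (x : ℕ →₀ ℝ) : lpNorm p x = pnorm p x ^ (1 / p : ℝ) := rfl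

lemma pnorm_add (p : ℝ) {x y : ℕ →₀ ℝ} (h : Disjoint x.support y.support) :
    pnorm p (x + y) = pnorm p x + pnorm p y := by
  unfold pnorm
  rw [Finsupp.support_add_eq h, Finset.sum_union h]
  congr 1
  · refine Finset.sum_congr rfl fun i hi => ?_
    rw [Finsupp.add_apply, Finsupp.notMem_support_iff.1 (Finset.disjoint_left.1 h hi), add_zero]
  · refine Finset.sum_congr rfl fun i hi => ?_
    rw [Finsupp.add_apply, Finsupp.notMem_support_iff.1 (Finset.disjoint_right.1 h hi), zero_add]

lemma pnorm_smul (p : ℝ) (hp : p ≠ 0) (c : ℝ) (x : ℕ →₀ ℝ) :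
    pnorm p (c • x) = |c| ^ p * pnorm p x := by
  rcases eq_or_ne c 0 with rfl | hc
  · simp [pnorm, Real.zero_rpow hp]
  · unfold pnorm
    rw [Finsupp.support_smul_eq hc, Finset.mul_sum]
    refine Finset.sum_congr rfl fun i _ => ?_
    rw [Finsupp.smul_apply, smul_eq_mul, abs_mul, Real.mul_rpow (abs_nonneg _) (abs_nonneg _)]

lemma Jpart_apply (α s : ℝ) (m : ℕ) (x : ℕ →₀ ℝ) (i : ℕ) :
    Jpart α s m x i = if (∃ j : ℤ, |x i| = α ^ (m : ℤ) * s ^ j) then x i else 0 := by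
  simp [Jpart, Finsupp.filter_apply]

lemma Jpart_support_subset (α s : ℝ) (m : ℕ) (x : ℕ →₀ ℝ) :
    (Jpart α s m x).support ⊆ x.support := by
  intro i hi
  rw [Jpart, Finsupp.support_filter] at hi
  exact (Finset.mem_filter.1 hi).1

lemma pnorm_Jpart_le (p α s : ℝ) (m : ℕ) (x : ℕ →₀ ℝ) :
    pnorm p (Jpart α s m x) ≤ pnorm p x := by
  unfold pnorm
  calc ∑ i ∈ (Jpart α s m x).support, |Jpart α s m x i| ^ p
      = ∑ i ∈ (Jpart α s m x).support, |x i| ^ p := by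
        refine Finset.sum_congr rfl fun i hi => ?_
        rw [Jpart, Finsupp.support_filter, Finset.mem_filter] at hi
        rw [Jpart_apply, if_pos hi.2]
    _ ≤ ∑ i ∈ x.support, |x i| ^ p :=
        Finset.sum_le_sum_of_subset_of_nonneg (Jpart_support_subset α s m x)
          (fun i _ _ => Real.rpow_nonneg (abs_nonneg _) _)

lemma Jpart_add (α s : ℝ) (m : ℕ) {x y : ℕ →₀ ℝ} (h : Disjoint x.support y.support) :
    Jpart α s m (x + y) = Jpart α s m x + Jpart α s m y := by
  ext i
  have hxy : x i = 0 ∨ y i = 0 := by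
    by_contra hcon
    push_neg at hcon
    exact (Finset.disjoint_left.1 h (Finsupp.mem_support_iff.2 hcon.1))
      (Finsupp.mem_support_iff.2 hcon.2)
  rw [Finsupp.add_apply, Jpart_apply, Jpart_apply, Jpart_apply, Finsupp.add_apply]
  rcases hxy with h0 | h0 <;> simp [h0]

lemma shift_cond (α : ℝ) {s : ℝ} (hα : 0 < α) (u m : ℕ) (v : ℝ) :
    (∃ j : ℤ, |α ^ (-(u:ℤ)) * v| = α ^ (m : ℤ) * s ^ j) ↔
    (∃ j : ℤ, |v| = α ^ ((m + u : ℕ) : ℤ) * s ^ j) := by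
  have hne : α ≠ 0 := ne_of_gt hα
  have h1 : α ^ ((u:ℤ)) * α ^ (-(u:ℤ)) = 1 := by
    rw [← zpow_add₀ hne]; simp
  have h1' : α ^ (-(u:ℤ)) * α ^ ((u:ℤ)) = 1 := by rw [mul_comm]; exact h1
  have hcast : α ^ ((m + u : ℕ) : ℤ) = α ^ ((u:ℤ)) * α ^ ((m:ℤ)) := by
    rw [← zpow_add₀ hne]; congr 1; push_cast; ring
  have habs : |α ^ (-(u:ℤ)) * v| = α ^ (-(u:ℤ)) * |v| := by
    rw [abs_mul, abs_of_pos (zpow_pos hα _)]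
  rw [habs]
  constructor
  · rintro ⟨j, hj⟩
    refine ⟨j, ?_⟩
    rw [hcast, mul_assoc, ← hj, ← mul_assoc, h1, one_mul]
  · rintro ⟨j, hj⟩
    refine ⟨j, ?_⟩
    rw [hj, hcast, ← mul_assoc, ← mul_assoc, h1', one_mul]

lemma Jpart_smul (α : ℝ) {s : ℝ} (hα : 0 < α) (m u : ℕ) (x : ℕ →₀ ℝ) :
    Jpart α s m ((α ^ (-(u:ℤ))) • x) = (α ^ (-(u:ℤ))) • Jpart α s (m + u) x := by
  ext i
  rw [Jpart_apply, Finsupp.smul_apply, Finsupp.smul_apply, Jpart_apply, smul_eq_mul, smul_eq_mul,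
    mul_ite, mul_zero]
  exact if_congr (shift_cond α hα u m (x i)) rfl rfl

lemma cond_iff_class (α : ℝ) (hα : 1 < α) (M : ℕ) (m : ℕ) (v : ℝ) (j₀ : ℤ)
    (hv : |v| = α ^ j₀) :
    (∃ j : ℤ, |v| = α ^ (m : ℤ) * (α ^ M) ^ j) ↔ ((j₀ : ZMod M) = (m : ZMod M)) := by
  have h0 : (0:ℝ) < α := lt_trans one_pos hα
  have hne : α ≠ 0 := ne_of_gt h0
  have hinj : Function.Injective fun n : ℤ => α ^ n :=
    zpow_right_injective₀ h0 (ne_of_gt hα)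
  constructor
  · rintro ⟨j, hj⟩
    rw [hv] at hj
    have heq : α ^ j₀ = α ^ ((m:ℤ) + (M:ℤ) * j) := by
      rw [hj, zpow_add₀ hne]
      congr 1
      rw [zpow_mul, zpow_natCast]
    have hj₀ : j₀ = (m:ℤ) + (M:ℤ) * j := hinj heq
    rw [hj₀]
    push_cast
    simp [ZMod.natCast_self]
  · intro h
    have hz : ((j₀ - (m:ℤ) : ℤ) : ZMod M) = 0 := by
      push_cast
      rw [h]
      ring
    obtain ⟨d, hd⟩ := (ZMod.intCast_zmod_eq_zero_iff_dvd _ _).1 hz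
    refine ⟨d, ?_⟩
    have hj₀ : j₀ = (m:ℤ) + (M:ℤ) * d := by linarith
    rw [hv, hj₀, zpow_add₀ hne, zpow_mul]; norm_cast

lemma Jpart_congr (α : ℝ) (hα : 1 < α) (M : ℕ) {m m' : ℕ}
    (h : (m : ZMod M) = (m' : ZMod M)) {x : ℕ →₀ ℝ} (hx : x ∈ Nset α) :
    Jpart α (α ^ M) m x = Jpart α (α ^ M) m' x := by
  ext i
  rw [Jpart_apply, Jpart_apply]
  rcases eq_or_ne (x i) 0 with h0 | h0
  · simp [h0]
  · obtain ⟨j₀, hj₀⟩ := hx i h0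
    refine if_congr ?_ rfl rfl
    rw [cond_iff_class α hα M m _ j₀ hj₀, cond_iff_class α hα M m' _ j₀ hj₀, h]

lemma pnorm_Jpart_eq_sum (p α s : ℝ) (m : ℕ) (x : ℕ →₀ ℝ) :
    pnorm p (Jpart α s m x)
      = ∑ i ∈ x.support.filter (fun i => ∃ j : ℤ, |x i| = α ^ (m : ℤ) * s ^ j), |x i| ^ p := by
  unfold pnorm
  have hsupp : (Jpart α s m x).support
      = x.support.filter (fun i => ∃ j : ℤ, |x i| = α ^ (m : ℤ) * s ^ j) := by
    rw [Jpart, Finsupp.support_filter]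
  rw [hsupp]
  refine Finset.sum_congr rfl fun i hi => ?_
  rw [Jpart_apply, if_pos (Finset.mem_filter.1 hi).2]

lemma sum_pnorm_Jpart (p α : ℝ) (hα : 1 < α) (M : ℕ) [NeZero M]
    {x : ℕ →₀ ℝ} (hx : x ∈ Nset α) :
    ∑ c : ZMod M, pnorm p (Jpart α (α ^ M) (ZMod.val c) x) = pnorm p x := by
  classical
  have hch : ∀ i, x i ≠ 0 → ∃ j : ℤ, |x i| = α ^ j := hx
  set J : ℕ → ℤ := fun i => if h : x i ≠ 0 then Classical.choose (hch i h) else 0 with hJdef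
  have hJ : ∀ i, x i ≠ 0 → |x i| = α ^ (J i) := by
    intro i h
    simp only [hJdef, dif_pos h]
    exact Classical.choose_spec (hch i h)
  have key : ∀ c : ZMod M,
      x.support.filter (fun i => ∃ j : ℤ, |x i| = α ^ ((ZMod.val c : ℕ) : ℤ) * (α ^ M) ^ j)
        = x.support.filter (fun i => ((J i : ZMod M) = c)) := by
    intro c
    refine Finset.filter_congr fun i hi => ?_
    have hxi : x i ≠ 0 := Finsupp.mem_support_iff.1 hi
    rw [cond_iff_class α hα M (ZMod.val c) (x i) (J i) (hJ i hxi)]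
    constructor
    · intro h
      rw [h]
      simp [ZMod.natCast_val, ZMod.cast_id]
    · intro h
      rw [h]
      simp [ZMod.natCast_val, ZMod.cast_id]
  calc ∑ c : ZMod M, pnorm p (Jpart α (α ^ M) (ZMod.val c) x)
      = ∑ c : ZMod M, ∑ i ∈ x.support.filter (fun i => ((J i : ZMod M) = c)), |x i| ^ p := by
        refine Finset.sum_congr rfl fun c _ => ?_
        rw [pnorm_Jpart_eq_sum, key c]
    _ = ∑ i ∈ x.support, |x i| ^ p := Finset.sum_fiberwise _ _ _
    _ = pnorm p x := rfl

lemma Nset_smul {α : ℝ} (hα : 0 < α) (t : ℤ) {x : ℕ →₀ ℝ} (hx : x ∈ Nset α) :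
    (α ^ t) • x ∈ Nset α := by
  intro i hi
  rw [Finsupp.smul_apply, smul_eq_mul] at hi ⊢
  have hxi : x i ≠ 0 := by
    intro h
    exact hi (by simp [h])
  obtain ⟨j, hj⟩ := hx i hxi
  exact ⟨t + j, by rw [abs_mul, abs_of_pos (zpow_pos hα _), hj, zpow_add₀ (ne_of_gt hα)]⟩

lemma Nset_add {α : ℝ} {x y : ℕ →₀ ℝ} (hx : x ∈ Nset α) (hy : y ∈ Nset α)
    (h : Disjoint x.support y.support) : x + y ∈ Nset α := by
  intro i hi
  rw [Finsupp.add_apply] at hi ⊢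
  have hxy : x i = 0 ∨ y i = 0 := by
    by_contra hcon
    push_neg at hcon
    exact (Finset.disjoint_left.1 h (Finsupp.mem_support_iff.2 hcon.1))
      (Finsupp.mem_support_iff.2 hcon.2)
  rcases hxy with h0 | h0
  · rw [h0, zero_add] at hi ⊢
    exact hy i hi
  · rw [h0, add_zero] at hi ⊢
    exact hx i hi

lemma disjoint_sum_support (z : ℕ → ℕ →₀ ℝ) (G : ℕ) (w : Finset ℕ)
    (hd : ∀ j < G, Disjoint (z j).support w) :
    Disjoint (∑ j ∈ Finset.range G, z j).support w := by
  refine Finset.disjoint_left.2 fun a ha haw => ?_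
  have hmem := Finsupp.support_finset_sum ha
  obtain ⟨j, hj, haj⟩ := Finset.mem_biUnion.1 hmem
  exact (Finset.disjoint_left.1 (hd j (Finset.mem_range.1 hj)) haj) haw

lemma pnorm_sum_eq (p : ℝ) (z : ℕ → ℕ →₀ ℝ) :
    ∀ G : ℕ, (∀ j j', j < j' → j' < G → Disjoint (z j).support (z j').support) →
      pnorm p (∑ j ∈ Finset.range G, z j) = ∑ j ∈ Finset.range G, pnorm p (z j)
  | 0, _ => by simp [pnorm]
  | (G+1), hd => by
    rw [Finset.sum_range_succ, Finset.sum_range_succ,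
      pnorm_add p (disjoint_sum_support _ _ _ fun j hj => hd j G hj (Nat.lt_succ_self _)),
      pnorm_sum_eq p z G (fun j j' h h' => hd j j' h (h'.trans (Nat.lt_succ_self _)))]

lemma Jpart_sum_eq (α s : ℝ) (m : ℕ) (z : ℕ → ℕ →₀ ℝ) :
    ∀ G : ℕ, (∀ j j', j < j' → j' < G → Disjoint (z j).support (z j').support) →
      Jpart α s m (∑ j ∈ Finset.range G, z j) = ∑ j ∈ Finset.range G, Jpart α s m (z j)
  | 0, _ => by
      simp only [Finset.range_zero, Finset.sum_empty]
      rw [Jpart]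
      exact Finsupp.filter_zero _
  | (G+1), hd => by
    rw [Finset.sum_range_succ, Finset.sum_range_succ,
      Jpart_add α s m (disjoint_sum_support _ _ _ fun j hj => hd j G hj (Nat.lt_succ_self _)),
      Jpart_sum_eq α s m z G (fun j j' h h' => hd j j' h (h'.trans (Nat.lt_succ_self _)))]

lemma Nset_sum {α : ℝ} (z : ℕ → ℕ →₀ ℝ) :
    ∀ G : ℕ, (∀ j < G, z j ∈ Nset α) →
      (∀ j j', j < j' → j' < G → Disjoint (z j).support (z j').support) →
      (∑ j ∈ Finset.range G, z j) ∈ Nset α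
  | 0, _, _ => by
      simp only [Finset.range_zero, Finset.sum_empty]
      intro i hi
      simp at hi
  | (G+1), hz, hd => by
    rw [Finset.sum_range_succ]
    exact Nset_add
      (Nset_sum z G (fun j hj => hz j (hj.trans (Nat.lt_succ_self _)))
        (fun j j' h h' => hd j j' h (h'.trans (Nat.lt_succ_self _))))
      (hz G (Nat.lt_succ_self _))
      (disjoint_sum_support _ _ _ fun j hj => hd j G hj (Nat.lt_succ_self _))

def cumOf (N : ℕ → ℕ) (t : ℕ) : ℕ := ∑ u ∈ Finset.range t, N u

lemma cumOf_mono (N : ℕ → ℕ) : Monotone (cumOf N) := fun _ _ h =>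
  Finset.sum_le_sum_of_subset (Finset.range_subset_range.2 h)

lemma cumOf_succ (N : ℕ → ℕ) (t : ℕ) : cumOf N (t+1) = cumOf N t + N t :=
  Finset.sum_range_succ N t

def batOf (N : ℕ → ℕ) (M q : ℕ) : ℕ :=
  ((Finset.range M).filter fun t => cumOf N (t+1) ≤ q).card

lemma batOf_eq (N : ℕ → ℕ) (M t i : ℕ) (ht : t < M) (hi : i < N t) :
    batOf N M (cumOf N t + i) = t := by
  unfold batOf
  have hset : (Finset.range M).filter (fun t' => cumOf N (t'+1) ≤ cumOf N t + i)
      = Finset.range t := by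
    ext t'
    simp only [Finset.mem_filter, Finset.mem_range]
    constructor
    · rintro ⟨h1, h2⟩
      by_contra hc
      push_neg at hc
      have ha : cumOf N (t+1) ≤ cumOf N (t'+1) := cumOf_mono N (by omega)
      have hb : cumOf N (t+1) = cumOf N t + N t := cumOf_succ N t
      omega
    · intro h
      refine ⟨by omega, ?_⟩
      have ha : cumOf N (t'+1) ≤ cumOf N t := cumOf_mono N (by omega)
      omega
  rw [hset, Finset.card_range]

lemma sum_range_cumOf (N : ℕ → ℕ) (f : ℕ → ℝ) :
    ∀ T : ℕ, ∑ j ∈ Finset.range (cumOf N T), f j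
      = ∑ t ∈ Finset.range T, ∑ j ∈ Finset.Ico (cumOf N t) (cumOf N (t+1)), f j
  | 0 => by simp [cumOf]
  | (T+1) => by
    rw [Finset.sum_range_succ, ← sum_range_cumOf N f T, Finset.range_eq_Ico,
      ← Finset.sum_Ico_consecutive f (Nat.zero_le _) (cumOf_mono N (Nat.le_succ T))]
    simp only [Finset.range_eq_Ico, Nat.succ_eq_add_one]

lemma sum_zmod_shift {M : ℕ} [NeZero M] (f : ZMod M → ℝ) (d : ℕ) :
    ∑ t ∈ Finset.range M, f ((d + t : ℕ) : ZMod M) = ∑ c : ZMod M, f c := by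
  refine Finset.sum_nbij' (fun t => ((d + t : ℕ) : ZMod M))
    (fun c => (c - (d : ZMod M)).val) (fun a _ => Finset.mem_univ _)
    (fun c _ => Finset.mem_range.2 (ZMod.val_lt _)) ?_ ?_ (fun a _ => rfl)
  · intro t ht
    have h1 : ((d + t : ℕ) : ZMod M) - (d : ZMod M) = (t : ZMod M) := by
      push_cast
      ring
    rw [h1, ZMod.val_cast_of_lt (Finset.mem_range.1 ht)]
  · intro c _
    push_cast
    rw [ZMod.natCast_val, ZMod.cast_id]
    ring

set_option maxHeartbeats 2000000 in
theorem approximation_lemma (p : ℝ) (hp : 1 < p) (r : ℕ) (hr : 2 ≤ r)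
    (M : ℕ) (hM : M = Nat.log 2 r)
    (α : ℝ) (hα : 0 < α) (hαM : α ^ M = (r : ℝ) ^ (1 / p : ℝ))
    (x : ℕ → ℕ →₀ ℝ) (hblock : IsBlockSeq x) (hxN : ∀ n, x n ∈ Nset α)
    (hlo : ∀ n, α ^ (-2 : ℤ) ≤ lpNorm p (x n))
    (hhi : ∀ n, lpNorm p (x n) ≤ α ^ (-1 : ℤ)) :
    ∃ (y : ℕ → ℕ →₀ ℝ) (c : ℕ → ℝ) (F : ℕ → Finset ℕ),
      (∀ n, y n = ∑ k ∈ F n, c k • x k) ∧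
      (∀ n m : ℕ, n < m → ∀ a ∈ F n, ∀ b ∈ F m, a < b) ∧
      IsBlockSeq y ∧
      (∀ n, y n ∈ Nset α) ∧
      (∀ n m : ℕ, α ^ (-3 : ℤ) ≤ lpNorm p (Jpart α ((r : ℝ) ^ (1 / p : ℝ)) m (y n))) ∧
      (∀ n m : ℕ, lpNorm p (Jpart α ((r : ℝ) ^ (1 / p : ℝ)) m (y n)) ≤ 1) := by
  classical
  have hp0 : (0:ℝ) < p := lt_trans one_pos hp
  have hpne : p ≠ 0 := ne_of_gt hp0
  have hM1 : 0 < M := by rw [hM]; exact Nat.log_pos one_lt_two hr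
  haveI : NeZero M := ⟨by omega⟩
  have hr1 : (1:ℝ) < (r:ℝ) := by exact_mod_cast (by omega : 1 < r)
  have hα1 : 1 < α := by
    by_contra hcon
    push_neg at hcon
    have h1 : α ^ M ≤ 1 := pow_le_one₀ hα.le hcon
    have h2 : (1:ℝ) < (r:ℝ) ^ (1/p : ℝ) :=
      (Real.one_lt_rpow_iff_of_pos (by linarith)).2 (Or.inl ⟨hr1, by positivity⟩)
    rw [hαM] at h1; linarith
  have hα0 : (0:ℝ) ≤ α := hα.le
  have hMp : α ^ ((M:ℝ) * p) = (r:ℝ) := by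
    have h1 : ((α ^ M : ℝ)) ^ (p:ℝ) = ((r:ℝ) ^ (1/p:ℝ)) ^ (p:ℝ) := by rw [hαM]
    rw [← Real.rpow_natCast α M, ← Real.rpow_mul hα0] at h1
    rw [h1, ← Real.rpow_mul (by positivity), one_div_mul_cancel hpne, Real.rpow_one]
  have h2M : ((2:ℝ)) ^ M ≤ (r:ℝ) := by
    have h := Nat.pow_log_le_self 2 (by omega : r ≠ 0)
    rw [← hM] at h
    exact_mod_cast h
  have hβ2 : (2:ℝ) ≤ α ^ (p:ℝ) := by
    by_contra hcon
    push_neg at hcon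
    have hnn : (0:ℝ) ≤ α ^ (p:ℝ) := Real.rpow_nonneg hα0 p
    have hlt : (α ^ (p:ℝ)) ^ M < 2 ^ M := pow_lt_pow_left₀ hcon hnn (by omega)
    have heq : (α ^ (p:ℝ)) ^ M = α ^ ((M:ℝ) * p) := by
      rw [← Real.rpow_natCast (α ^ (p:ℝ)) M, ← Real.rpow_mul hα0, mul_comm]
    rw [heq, hMp] at hlt
    linarith
  have hip_pos : 0 < α ^ (-(p:ℝ)) := Real.rpow_pos_of_pos hα _
  have hinvp : α ^ (-(p:ℝ)) ≤ 1/2 := by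
    rw [Real.rpow_neg hα0, ← one_div]
    exact one_div_le_one_div_of_le two_pos hβ2
  set a2 : ℝ := α ^ ((-2:ℝ) * p) with ha2def
  have ha2eq : a2 = α ^ (-(p:ℝ)) * α ^ (-(p:ℝ)) := by
    rw [ha2def, ← Real.rpow_add hα]; congr 1; ring
  have ha2pos : 0 < a2 := Real.rpow_pos_of_pos hα _
  have ha2le : a2 ≤ 1/4 := by rw [ha2eq]; nlinarith
  set ε : ℝ := a2 / (4 * M) with hεdef
  have hMR : (1:ℝ) ≤ (M:ℝ) := by exact_mod_cast hM1
  have h4M : (0:ℝ) < 4 * M := by nlinarith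
  have hε : 0 < ε := div_pos ha2pos h4M
  have hMε : (M:ℝ) * ε = a2 / 4 := by rw [hεdef]; field_simp
  have hε16 : ε ≤ 1/16 := by
    rw [hεdef, div_le_iff₀ h4M]; nlinarith
  -- pnorm bounds
  have hpn_lo : ∀ k, a2 ≤ pnorm p (x k) := by
    intro k
    have h1 := hlo k
    rw [lpNorm_def] at h1
    have h2 : (α ^ (-2:ℤ)) ^ (p:ℝ) ≤ (pnorm p (x k) ^ (1/p:ℝ)) ^ (p:ℝ) :=
      Real.rpow_le_rpow (le_of_lt (zpow_pos hα _)) h1 hp0.le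
    rw [← Real.rpow_intCast α (-2), ← Real.rpow_mul hα0,
      ← Real.rpow_mul (pnorm_nonneg p _), one_div_mul_cancel hpne, Real.rpow_one] at h2
    have h3 : a2 = α ^ ((((-2:ℤ)):ℝ) * p) := by
      rw [ha2def]; congr 1; push_cast; ring
    rw [h3]; exact h2
  have hpn_hi : ∀ k, pnorm p (x k) ≤ α ^ (-(p:ℝ)) := by
    intro k
    have h1 := hhi k
    rw [lpNorm_def] at h1
    have h2 : (pnorm p (x k) ^ (1/p:ℝ)) ^ (p:ℝ) ≤ (α ^ (-1:ℤ)) ^ (p:ℝ) :=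
      Real.rpow_le_rpow (Real.rpow_nonneg (pnorm_nonneg p _) _) h1 hp0.le
    rw [← Real.rpow_intCast α (-1), ← Real.rpow_mul hα0,
      ← Real.rpow_mul (pnorm_nonneg p _), one_div_mul_cancel hpne, Real.rpow_one] at h2
    have h3 : α ^ ((((-1:ℤ)):ℝ) * p) = α ^ (-(p:ℝ)) := by
      congr 1; push_cast; ring
    rw [h3] at h2; exact h2
  -- the class-wise masses
  set A : ℕ → ZMod M → ℝ := fun k c => pnorm p (Jpart α (α ^ M) (ZMod.val c) (x k)) with hAdef
  have hA_nonneg : ∀ k c, 0 ≤ A k c := fun k c => pnorm_nonneg _ _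
  have hA_le : ∀ k c, A k c ≤ α ^ (-(p:ℝ)) := fun k c =>
    le_trans (pnorm_Jpart_le p α (α ^ M) _ _) (hpn_hi k)
  have hA_sum : ∀ k, ∑ c : ZMod M, A k c = pnorm p (x k) := by
    intro k
    simp only [hAdef]
    exact sum_pnorm_Jpart p α hα1 M (hxN k)
  have hA1 : ∀ k c, A k c ≤ 1 := fun k c => le_trans (hA_le k c) (by linarith)
  -- pigeonhole on discretized class masses
  set K : ℕ := ⌈1/ε⌉₊ with hKdef
  have hBlt : ∀ k c, ⌊A k c / ε⌋₊ < K + 1 := by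
    intro k c
    have h1 : A k c / ε ≤ 1/ε := by
      gcongr
      exact hA1 k c
    calc ⌊A k c / ε⌋₊ ≤ ⌊1/ε⌋₊ := Nat.floor_mono h1
      _ ≤ ⌈1/ε⌉₊ := Nat.floor_le_ceil _
      _ < K + 1 := Nat.lt_succ_self _
  set B : ℕ → ZMod M → Fin (K+1) := fun k c => ⟨⌊A k c / ε⌋₊, hBlt k c⟩ with hBdef
  obtain ⟨v, hvinf⟩ := Finite.exists_infinite_fiber B
  set P : ℕ → Prop := fun k => B k = v with hPdef
  have hPinf : (setOf P).Infinite := by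
    have h1 : (B ⁻¹' {v}).Infinite := Set.infinite_coe_iff.1 hvinf
    have h2 : setOf P = B ⁻¹' {v} := by ext k; exact Iff.rfl
    rw [h2]; exact h1
  set e : ℕ → ℕ := Nat.nth P with hedef
  have he_mono : StrictMono e := Nat.nth_strictMono hPinf
  have heinj : Function.Injective e := he_mono.injective
  have heP : ∀ n, P (e n) := fun n => Nat.nth_mem_of_infinite hPinf n
  set v' : ZMod M → ℝ := fun c => ((v c : ℕ) : ℝ) * ε with hv'def
  have hv'bounds : ∀ k, P k → ∀ c, v' c ≤ A k c ∧ A k c ≤ v' c + ε := by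
    intro k hk c
    have hfloor : ⌊A k c / ε⌋₊ = (v c : ℕ) := by
      have h1 : B k c = v c := congrFun hk c
      exact congrArg Fin.val h1
    constructor
    · have h1 : ((v c : ℕ) : ℝ) ≤ A k c / ε := by
        rw [← hfloor]
        exact Nat.floor_le (div_nonneg (hA_nonneg k c) hε.le)
      calc v' c = ((v c : ℕ) : ℝ) * ε := rfl
        _ ≤ (A k c / ε) * ε := mul_le_mul_of_nonneg_right h1 hε.le
        _ = A k c := div_mul_cancel₀ _ (ne_of_gt hε)
    · have h2 : A k c / ε < ((v c : ℕ) : ℝ) + 1 := by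
        rw [← hfloor]
        exact Nat.lt_floor_add_one _
      have h3 := (div_lt_iff₀ hε).1 h2
      calc A k c ≤ (((v c : ℕ):ℝ) + 1) * ε := h3.le
        _ = v' c + ε := by rw [hv'def]; ring
  have hv'_nonneg : ∀ c, 0 ≤ v' c := fun c => mul_nonneg (Nat.cast_nonneg _) hε.le
  have hv'sum_lo : a2 - (M:ℝ) * ε ≤ ∑ c : ZMod M, v' c := by
    have h2 : ∑ c : ZMod M, (A (e 0) c - ε) ≤ ∑ c : ZMod M, v' c :=
      Finset.sum_le_sum fun c _ => by
        have h := hv'bounds (e 0) (heP 0) c; linarith [h.2]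
    rw [Finset.sum_sub_distrib, hA_sum] at h2
    have hcard : ∑ _c : ZMod M, ε = (M:ℝ) * ε := by
      rw [Finset.sum_const, Finset.card_univ, ZMod.card, nsmul_eq_mul]
    rw [hcard] at h2
    linarith [hpn_lo (e 0)]
  have hv'sum_hi : ∑ c : ZMod M, v' c ≤ α ^ (-(p:ℝ)) := by
    have h2 : ∑ c : ZMod M, v' c ≤ ∑ c : ZMod M, A (e 0) c :=
      Finset.sum_le_sum fun c _ => (hv'bounds (e 0) (heP 0) c).1
    rw [hA_sum] at h2
    exact le_trans h2 (hpn_hi (e 0))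
  -- choice of the shift L
  obtain ⟨L, hLlt⟩ := exists_pow_lt_of_lt_one hε (by linarith : α ^ (-(p:ℝ)) < 1)
  set W : ℕ → ℝ := fun t => α ^ (-(t:ℝ) * p) with hWdef
  have hWbase : ∀ t : ℕ, α ^ (-(t:ℝ) * p) = (α ^ (-(p:ℝ))) ^ t := by
    intro t
    rw [← Real.rpow_natCast (α ^ (-(p:ℝ))) t, ← Real.rpow_mul hα0]
    congr 1; ring
  have hWpow : ∀ t : ℕ, W t = (α ^ (-(p:ℝ))) ^ t := fun t => hWbase t
  have hWpos : ∀ t, 0 < W t := fun t => Real.rpow_pos_of_pos hα _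
  have hWanti : ∀ t t', t ≤ t' → W t' ≤ W t := by
    intro t t' h
    rw [hWdef]
    apply Real.rpow_le_rpow_of_exponent_le hα1.le
    have h1 : (t:ℝ) ≤ t' := Nat.cast_le.2 h
    nlinarith
  have hWL : ∀ t, L ≤ t → W t ≤ ε := fun t ht =>
    le_trans (hWanti L t ht) (by rw [hWpow]; exact hLlt.le)
  -- batch sizes
  set N : ℕ → ℕ := fun t => ⌊α ^ (((L + t : ℕ):ℝ) * p)⌋₊ with hNdef
  have hXpos : ∀ t : ℕ, (0:ℝ) < α ^ (((L + t : ℕ):ℝ) * p) := fun t => Real.rpow_pos_of_pos hα _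
  have hX1 : ∀ t : ℕ, (1:ℝ) ≤ α ^ (((L + t : ℕ):ℝ) * p) := by
    intro t
    rw [show (1:ℝ) = α ^ (0:ℝ) by rw [Real.rpow_zero]]
    apply Real.rpow_le_rpow_of_exponent_le hα1.le
    positivity
  have hN1 : ∀ t, 1 ≤ N t := by
    intro t
    rw [hNdef]
    exact Nat.le_floor (by exact_mod_cast hX1 t)
  have hNub : ∀ t : ℕ, (N t : ℝ) ≤ α ^ (((L + t:ℕ):ℝ) * p) := by
    intro t
    rw [hNdef]
    exact Nat.floor_le (hXpos t).le
  have hNlb : ∀ t : ℕ, α ^ (((L + t:ℕ):ℝ) * p) - 1 ≤ (N t:ℝ) := by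
    intro t
    have h := Nat.lt_floor_add_one (α ^ (((L + t:ℕ):ℝ) * p))
    rw [hNdef]
    push_cast
    push_cast at h
    linarith
  have hWinv : ∀ t : ℕ, W (L + t) * α ^ (((L + t:ℕ):ℝ) * p) = 1 := by
    intro t
    rw [hWdef, ← Real.rpow_add hα]
    rw [show (-((L + t : ℕ):ℝ) * p + ((L + t : ℕ):ℝ) * p) = (0:ℝ) from by ring, Real.rpow_zero]
  have hprod_hi : ∀ t : ℕ, (N t : ℝ) * W (L + t) ≤ 1 := by
    intro t
    calc (N t:ℝ) * W (L+t) ≤ α ^ (((L+t:ℕ):ℝ)*p) * W (L+t) :=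
          mul_le_mul_of_nonneg_right (hNub t) (hWpos _).le
      _ = 1 := by rw [mul_comm]; exact hWinv t
  have hprod_lo : ∀ t : ℕ, 1 - ε ≤ (N t : ℝ) * W (L + t) := by
    intro t
    have h1 : (α ^ (((L+t:ℕ):ℝ)*p) - 1) * W (L+t) ≤ (N t:ℝ) * W (L+t) :=
      mul_le_mul_of_nonneg_right (hNlb t) (hWpos _).le
    have h2 : (α ^ (((L+t:ℕ):ℝ)*p) - 1) * W (L+t) = 1 - W (L+t) := by
      rw [sub_mul, one_mul, mul_comm, hWinv t]
    have h3 : W (L+t) ≤ ε := hWL (L+t) (Nat.le_add_right _ _)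
    linarith
  set G : ℕ := cumOf N M with hGdef
  have hG1 : 1 ≤ G := le_trans (hN1 0)
    (Finset.single_le_sum (f := N) (fun u _ => Nat.zero_le _) (Finset.mem_range.2 hM1))
  set bat : ℕ → ℕ := batOf N M with hbatdef
  set z : ℕ → ℕ → (ℕ →₀ ℝ) :=
    fun n j => (α ^ (-((L + bat j : ℕ) : ℤ))) • x (e (n * G + j)) with hzdef
  set y : ℕ → (ℕ →₀ ℝ) := fun n => ∑ j ∈ Finset.range G, z n j with hydef
  set cf : ℕ → ℝ :=
    fun k => α ^ (-((L + bat ((Function.invFun e k) % G) : ℕ) : ℤ)) with hcfdef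
  set F : ℕ → Finset ℕ := fun n => (Finset.range G).image (fun j => e (n * G + j)) with hFdef
  have hcf_at : ∀ n j, j < G → cf (e (n * G + j)) = α ^ (-((L + bat j : ℕ) : ℤ)) := by
    intro n j hj
    simp only [hcfdef]
    have hmod : (n * G + j) % G = j := by
      conv_lhs => rw [Nat.add_mod, Nat.mul_mod_left]
      simp [Nat.mod_eq_of_lt hj]
    rw [Function.leftInverse_invFun heinj, hmod]
  have hzsupp : ∀ n j, (z n j).support ⊆ (x (e (n * G + j))).support := by
    intro n j
    simp only [hzdef]
    exact Finsupp.support_smul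
  have hidx : ∀ {n m j j' : ℕ}, n < m → j < G → n * G + j < m * G + j' := by
    intro n m j j' hnm hj
    have e1 : (n+1)*G = n*G + G := Nat.succ_mul n G
    have e2 : (n+1)*G ≤ m*G := Nat.mul_le_mul_right G hnm
    omega
  have hzdisj : ∀ n j j', j < j' → j' < G → Disjoint (z n j).support (z n j').support := by
    intro n j j' h h'
    refine Finset.disjoint_left.2 fun a ha ha' => ?_
    have h1 := hzsupp n j ha
    have h2 := hzsupp n j' ha'
    have hlt : e (n*G+j) < e (n*G+j') := he_mono (by omega)
    exact lt_irrefl a (hblock _ _ hlt a h1 a h2)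
  have hyN : ∀ n, y n ∈ Nset α := by
    intro n
    simp only [hydef]
    refine Nset_sum (z n) G (fun j _ => ?_) (hzdisj n)
    simp only [hzdef]
    exact Nset_smul hα _ (hxN _)
  have hyF : ∀ n, y n = ∑ k ∈ F n, cf k • x k := by
    intro n
    simp only [hydef, hFdef]
    rw [Finset.sum_image (fun a _ b _ hab => by
      have := heinj hab
      omega)]
    refine Finset.sum_congr rfl fun j hj => ?_
    rw [hcf_at n j (Finset.mem_range.1 hj)]
  have hFord : ∀ n m, n < m → ∀ a ∈ F n, ∀ b ∈ F m, a < b := by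
    intro n m hnm a haF b hbF
    simp only [hFdef] at haF hbF
    obtain ⟨j, hj, rfl⟩ := Finset.mem_image.1 haF
    obtain ⟨j', _, rfl⟩ := Finset.mem_image.1 hbF
    exact he_mono (hidx hnm (Finset.mem_range.1 hj))
  have hyblock : IsBlockSeq y := by
    intro n m hnm a ha b hb
    simp only [hydef] at ha hb
    obtain ⟨j, hj, haj⟩ := Finset.mem_biUnion.1 (Finsupp.support_finset_sum ha)
    obtain ⟨j', _, hbj⟩ := Finset.mem_biUnion.1 (Finsupp.support_finset_sum hb)
    exact hblock _ _ (he_mono (hidx hnm (Finset.mem_range.1 hj))) a (hzsupp n j haj)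
      b (hzsupp m j' hbj)
  -- the key identity
  have hkey : ∀ n m : ℕ, pnorm p (Jpart α (α ^ M) m (y n))
      = ∑ t ∈ Finset.range M, ∑ j ∈ Finset.Ico (cumOf N t) (cumOf N (t+1)),
          W (L + t) * A (e (n*G+j)) (((m + (L + t) : ℕ)) : ZMod M) := by
    intro n m
    have hJd : ∀ j j', j < j' → j' < G →
        Disjoint (Jpart α (α^M) m (z n j)).support (Jpart α (α^M) m (z n j')).support :=
      fun j j' h h' => Finset.disjoint_of_subset_left (Jpart_support_subset _ _ _ _)
        (Finset.disjoint_of_subset_right (Jpart_support_subset _ _ _ _) (hzdisj n j j' h h'))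
    have hterm : ∀ j, pnorm p (Jpart α (α^M) m (z n j))
        = W (L + bat j) * A (e (n*G+j)) (((m + (L + bat j) : ℕ)) : ZMod M) := by
      intro j
      simp only [hzdef]
      rw [Jpart_smul α hα m (L + bat j) (x (e (n*G+j))), pnorm_smul p hpne]
      congr 1
      · rw [abs_of_pos (zpow_pos hα _), ← Real.rpow_intCast α (-((L + bat j : ℕ) : ℤ)),
          ← Real.rpow_mul hα0, hWdef]
        congr 1
        push_cast
        ring
      · have hmm' : (((m + (L + bat j) : ℕ)) : ZMod M)
            = (((ZMod.val (((m + (L + bat j) : ℕ)) : ZMod M)) : ℕ) : ZMod M) := by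
          rw [ZMod.natCast_val, ZMod.cast_id]
        simp only [hAdef]
        rw [Jpart_congr α hα1 M hmm' (hxN _)]
    calc pnorm p (Jpart α (α ^ M) m (y n))
        = ∑ j ∈ Finset.range G, pnorm p (Jpart α (α^M) m (z n j)) := by
          simp only [hydef]
          rw [Jpart_sum_eq α (α^M) m (z n) G (hzdisj n),
            pnorm_sum_eq p (fun j => Jpart α (α^M) m (z n j)) G hJd]
      _ = ∑ j ∈ Finset.range G,
            W (L + bat j) * A (e (n*G+j)) (((m + (L + bat j) : ℕ)) : ZMod M) :=
          Finset.sum_congr rfl fun j _ => hterm j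
      _ = ∑ t ∈ Finset.range M, ∑ j ∈ Finset.Ico (cumOf N t) (cumOf N (t+1)),
            W (L + bat j) * A (e (n*G+j)) (((m + (L + bat j) : ℕ)) : ZMod M) := by
          rw [hGdef]
          exact sum_range_cumOf N _ M
      _ = ∑ t ∈ Finset.range M, ∑ j ∈ Finset.Ico (cumOf N t) (cumOf N (t+1)),
            W (L + t) * A (e (n*G+j)) (((m + (L + t) : ℕ)) : ZMod M) := by
          refine Finset.sum_congr rfl fun t ht => Finset.sum_congr rfl fun j hj => ?_
          obtain ⟨hj1, hj2⟩ := Finset.mem_Ico.1 hj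
          have hdecomp : j = cumOf N t + (j - cumOf N t) := by omega
          have hlt : j - cumOf N t < N t := by
            have := cumOf_succ N t
            omega
          have hbatj : bat j = t := by
            rw [hbatdef, hdecomp]
            exact batOf_eq N M t _ (Finset.mem_range.1 ht) hlt
          rw [hbatj]
  -- upper bound
  have hup : ∀ n m : ℕ, pnorm p (Jpart α (α ^ M) m (y n)) ≤ 1 := by
    intro n m
    rw [hkey n m]
    have h1 : ∀ t ∈ Finset.range M,
        ∑ j ∈ Finset.Ico (cumOf N t) (cumOf N (t+1)),
          W (L + t) * A (e (n*G+j)) (((m + (L + t) : ℕ)) : ZMod M)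
        ≤ v' (((m + (L + t) : ℕ)) : ZMod M) + ε := by
      intro t _
      have hcard : (Finset.Ico (cumOf N t) (cumOf N (t+1))).card = N t := by
        rw [Nat.card_Ico, cumOf_succ]; omega
      have hvnn : 0 ≤ v' (((m + (L + t) : ℕ)) : ZMod M) + ε := by
        have := hv'_nonneg (((m + (L + t) : ℕ)) : ZMod M); linarith
      calc ∑ j ∈ Finset.Ico (cumOf N t) (cumOf N (t+1)),
            W (L + t) * A (e (n*G+j)) (((m + (L + t) : ℕ)) : ZMod M)
          ≤ ∑ _j ∈ Finset.Ico (cumOf N t) (cumOf N (t+1)),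
            W (L + t) * (v' (((m + (L + t) : ℕ)) : ZMod M) + ε) :=
            Finset.sum_le_sum fun j _ => mul_le_mul_of_nonneg_left
              ((hv'bounds _ (heP _) _).2) (hWpos _).le
        _ = (N t : ℝ) * (W (L+t) * (v' (((m + (L + t) : ℕ)) : ZMod M) + ε)) := by
            rw [Finset.sum_const, hcard, nsmul_eq_mul]
        _ = ((N t:ℝ) * W (L+t)) * (v' (((m + (L + t) : ℕ)) : ZMod M) + ε) := by ring
        _ ≤ 1 * (v' (((m + (L + t) : ℕ)) : ZMod M) + ε) :=
            mul_le_mul_of_nonneg_right (hprod_hi t) hvnn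
        _ = v' (((m + (L + t) : ℕ)) : ZMod M) + ε := one_mul _
    have h2 : ∑ t ∈ Finset.range M, (v' (((m + (L + t) : ℕ)) : ZMod M) + ε)
        = (∑ c : ZMod M, v' c) + (M:ℝ) * ε := by
      rw [Finset.sum_add_distrib]
      congr 1
      · have hshape : ∀ t : ℕ, (((m + (L + t) : ℕ)) : ZMod M) = ((((m + L) + t : ℕ)) : ZMod M) := by
          intro t; congr 1; omega
        rw [Finset.sum_congr rfl (fun t _ => by rw [hshape t])]
        exact sum_zmod_shift v' (m + L)
      · rw [Finset.sum_const, Finset.card_range, nsmul_eq_mul]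
    calc ∑ t ∈ Finset.range M, ∑ j ∈ Finset.Ico (cumOf N t) (cumOf N (t+1)),
          W (L + t) * A (e (n*G+j)) (((m + (L + t) : ℕ)) : ZMod M)
        ≤ ∑ t ∈ Finset.range M, (v' (((m + (L + t) : ℕ)) : ZMod M) + ε) :=
          Finset.sum_le_sum h1
      _ = (∑ c : ZMod M, v' c) + (M:ℝ) * ε := h2
      _ ≤ 1 := by
          rw [hMε]
          linarith [hv'sum_hi]
  -- lower bound
  have hlow : ∀ n m : ℕ, α ^ ((-3:ℝ) * p) ≤ pnorm p (Jpart α (α ^ M) m (y n)) := by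
    intro n m
    rw [hkey n m]
    have h1 : ∀ t ∈ Finset.range M,
        (1 - ε) * v' (((m + (L + t) : ℕ)) : ZMod M)
        ≤ ∑ j ∈ Finset.Ico (cumOf N t) (cumOf N (t+1)),
          W (L + t) * A (e (n*G+j)) (((m + (L + t) : ℕ)) : ZMod M) := by
      intro t _
      have hcard : (Finset.Ico (cumOf N t) (cumOf N (t+1))).card = N t := by
        rw [Nat.card_Ico, cumOf_succ]; omega
      have hvnn := hv'_nonneg (((m + (L + t) : ℕ)) : ZMod M)
      calc (1 - ε) * v' (((m + (L + t) : ℕ)) : ZMod M)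
          ≤ ((N t:ℝ) * W (L+t)) * v' (((m + (L + t) : ℕ)) : ZMod M) :=
            mul_le_mul_of_nonneg_right (hprod_lo t) hvnn
        _ = (N t : ℝ) * (W (L+t) * v' (((m + (L + t) : ℕ)) : ZMod M)) := by ring
        _ = ∑ _j ∈ Finset.Ico (cumOf N t) (cumOf N (t+1)),
              W (L + t) * v' (((m + (L + t) : ℕ)) : ZMod M) := by
            rw [Finset.sum_const, hcard, nsmul_eq_mul]
        _ ≤ ∑ j ∈ Finset.Ico (cumOf N t) (cumOf N (t+1)),
              W (L + t) * A (e (n*G+j)) (((m + (L + t) : ℕ)) : ZMod M) :=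
            Finset.sum_le_sum fun j _ => mul_le_mul_of_nonneg_left
              ((hv'bounds _ (heP _) _).1) (hWpos _).le
    have h2 : ∑ t ∈ Finset.range M, (1 - ε) * v' (((m + (L + t) : ℕ)) : ZMod M)
        = (1 - ε) * ∑ c : ZMod M, v' c := by
      rw [← Finset.mul_sum]
      congr 1
      have hshape : ∀ t : ℕ, (((m + (L + t) : ℕ)) : ZMod M) = ((((m + L) + t : ℕ)) : ZMod M) := by
        intro t; congr 1; omega
      rw [Finset.sum_congr rfl (fun t _ => by rw [hshape t])]
      exact sum_zmod_shift v' (m + L)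
    have h3 : α ^ ((-3:ℝ) * p) = α ^ (-(p:ℝ)) * a2 := by
      rw [ha2def, ← Real.rpow_add hα]; congr 1; ring
    have h4 : (1 - ε) * (a2 - (M:ℝ)*ε) ≤ (1 - ε) * ∑ c : ZMod M, v' c := by
      apply mul_le_mul_of_nonneg_left hv'sum_lo
      linarith
    calc α ^ ((-3:ℝ) * p) = α ^ (-(p:ℝ)) * a2 := h3
      _ ≤ (1 - ε) * (a2 - (M:ℝ)*ε) := by
          rw [hMε]
          nlinarith [hip_pos, ha2pos, hinvp, hε16, hε]
      _ ≤ (1 - ε) * ∑ c : ZMod M, v' c := h4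
      _ = ∑ t ∈ Finset.range M, (1 - ε) * v' (((m + (L + t) : ℕ)) : ZMod M) := h2.symm
      _ ≤ ∑ t ∈ Finset.range M, ∑ j ∈ Finset.Ico (cumOf N t) (cumOf N (t+1)),
            W (L + t) * A (e (n*G+j)) (((m + (L + t) : ℕ)) : ZMod M) :=
          Finset.sum_le_sum h1
  refine ⟨y, cf, F, hyF, hFord, hyblock, hyN, ?_, ?_⟩
  · intro n m
    rw [← hαM, lpNorm_def]
    have h2 : (α ^ ((-3:ℝ)*p)) ^ (1/p : ℝ) ≤ (pnorm p (Jpart α (α^M) m (y n))) ^ (1/p:ℝ) :=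
      Real.rpow_le_rpow (Real.rpow_nonneg hα0 _) (hlow n m) (by positivity)
    have h3 : (α ^ ((-3:ℝ)*p)) ^ (1/p:ℝ) = α ^ (-3:ℤ) := by
      rw [← Real.rpow_mul hα0, ← Real.rpow_intCast α (-3)]
      congr 1
      push_cast
      field_simp
    rw [← h3]
    exact h2
  · intro n m
    rw [← hαM, lpNorm_def]
    exact Real.rpow_le_one (pnorm_nonneg _ _) (hup n m) (by positivity)
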